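/- arXiv:2208.13420 — 5 statements merged into one kernel-verified Lean document; each statement's English description precedes it below -/
import Mathlib

section
/- Let G(λ) be an invertible n×n complex matrix with M := G(λ)^{-1}, let λ ∈ ℂ, let w₁,…,w_k ∈ ℂ, and let ΔA₀,…,ΔA_d, ΔE₁,…,ΔE_k ∈ ℂ^{n×n}. Set ΔG := Σ_{p=0}^d λ^p ΔA_p + Σ_{j=1}^k w_j ΔE_j. Then det(G(λ) − ΔG) = 0 if and only if there exist vectors v_{A₀},…,v_{A_d}, v_{E₁},…,v_{E_k} ∈ ℂⁿ with v_λ := Σ_{p=0}^d λ^p v_{A_p} + Σ_{j=1}^k w_j v_{E_j} ≠ 0 such that v_{A_p} = ΔA_p M v_λ for all p and v_{E_j} = ΔE_j M v_λ for all j. -/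
open Finset in
private lemma sum_mulVec_aux {n : ℕ} {ι : Type*} (s : Finset ι)
    (A : ι → Matrix (Fin n) (Fin n) ℂ) (u : Fin n → ℂ) :
    (∑ i ∈ s, A i).mulVec u = ∑ i ∈ s, (A i).mulVec u :=
  map_sum (AddMonoidHom.mk' (fun B : Matrix (Fin n) (Fin n) ℂ => B.mulVec u)
    (fun B C => Matrix.add_mulVec B C u)) A s


open Finset in
/-- Lemma 2.4: with `M := G(λ)⁻¹` and
`ΔG = ∑ λ^p ΔA_p + ∑ w_j ΔE_j`, one has `det (G(λ) - ΔG) = 0` iff there exist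
vectors `v_{A_p}`, `v_{E_j}` with `v_λ := ∑ λ^p v_{A_p} + ∑ w_j v_{E_j} ≠ 0` such that
`v_{A_p} = ΔA_p M v_λ` and `v_{E_j} = ΔE_j M v_λ`. -/
theorem det_pert_eq_zero_iff_structured_mapping {n d k : ℕ}
    (Gl : Matrix (Fin n) (Fin n) ℂ) (hG : IsUnit Gl) (lam : ℂ) (w : Fin k → ℂ)
    (ΔA : Fin (d + 1) → Matrix (Fin n) (Fin n) ℂ)
    (ΔE : Fin k → Matrix (Fin n) (Fin n) ℂ) :
    (Gl - (∑ p : Fin (d + 1), lam ^ (p : ℕ) • ΔA p + ∑ j, w j • ΔE j)).det = 0 ↔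
      ∃ (vA : Fin (d + 1) → Fin n → ℂ) (vE : Fin k → Fin n → ℂ),
        (∑ p : Fin (d + 1), lam ^ (p : ℕ) • vA p + ∑ j, w j • vE j) ≠ 0 ∧
        (∀ p, vA p =
          (ΔA p).mulVec (Gl⁻¹.mulVec (∑ q : Fin (d + 1), lam ^ (q : ℕ) • vA q + ∑ j, w j • vE j))) ∧
        (∀ j, vE j =
          (ΔE j).mulVec (Gl⁻¹.mulVec (∑ q : Fin (d + 1), lam ^ (q : ℕ) • vA q + ∑ i, w i • vE i))) := by
  have hdet : IsUnit Gl.det := (Matrix.isUnit_iff_isUnit_det Gl).mp hG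
  have hMG : Gl⁻¹ * Gl = 1 := Matrix.nonsing_inv_mul Gl hdet
  have hGM : Gl * Gl⁻¹ = 1 := Matrix.mul_nonsing_inv Gl hdet
  set ΔG : Matrix (Fin n) (Fin n) ℂ :=
    ∑ p : Fin (d + 1), lam ^ (p : ℕ) • ΔA p + ∑ j, w j • ΔE j with hΔG
  rw [← Matrix.exists_mulVec_eq_zero_iff]
  constructor
  · rintro ⟨u, hu, hu0⟩
    refine ⟨fun p => (ΔA p).mulVec u, fun j => (ΔE j).mulVec u, ?_⟩
    have hsum : (∑ q : Fin (d + 1), lam ^ (q : ℕ) • (ΔA q).mulVec u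
        + ∑ j, w j • (ΔE j).mulVec u) = ΔG.mulVec u := by
      simp [hΔG, Matrix.add_mulVec, sum_mulVec_aux, Matrix.smul_mulVec]
    have hGu : ΔG.mulVec u = Gl.mulVec u := by
      have := hu0
      rw [Matrix.sub_mulVec, sub_eq_zero] at this
      exact this.symm
    have hMGu : Gl⁻¹.mulVec (ΔG.mulVec u) = u := by
      rw [hGu, Matrix.mulVec_mulVec, hMG, Matrix.one_mulVec]
    have hne : ΔG.mulVec u ≠ 0 := by
      rw [hGu]
      intro h
      apply hu
      have : Gl⁻¹.mulVec (Gl.mulVec u) = 0 := by rw [h, Matrix.mulVec_zero]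
      rwa [Matrix.mulVec_mulVec, hMG, Matrix.one_mulVec] at this
    rw [hsum]
    exact ⟨hne, fun p => by rw [hMGu], fun j => by rw [hMGu]⟩
  · rintro ⟨vA, vE, hne, hA, hE⟩
    set vlam : Fin n → ℂ :=
      ∑ q : Fin (d + 1), lam ^ (q : ℕ) • vA q + ∑ j, w j • vE j with hvlam
    refine ⟨Gl⁻¹.mulVec vlam, ?_, ?_⟩
    · intro h
      apply hne
      have : Gl.mulVec (Gl⁻¹.mulVec vlam) = 0 := by rw [h, Matrix.mulVec_zero]
      rwa [Matrix.mulVec_mulVec, hGM, Matrix.one_mulVec] at this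
    · have hΔ : ΔG.mulVec (Gl⁻¹.mulVec vlam) = vlam := by
        have : ΔG.mulVec (Gl⁻¹.mulVec vlam)
            = ∑ q : Fin (d + 1), lam ^ (q : ℕ) • (ΔA q).mulVec (Gl⁻¹.mulVec vlam)
              + ∑ j, w j • (ΔE j).mulVec (Gl⁻¹.mulVec vlam) := by
          simp [hΔG, Matrix.add_mulVec, sum_mulVec_aux, Matrix.smul_mulVec,
            Matrix.add_mul, Matrix.smul_mul, Finset.sum_mul]
        rw [this]
        conv_rhs => rw [hvlam]
        congr 1
        · exact Finset.sum_congr rfl fun q _ => by rw [← hA q]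
        · exact Finset.sum_congr rfl fun j _ => by rw [← hE j]
      rw [Matrix.sub_mulVec, hΔ, Matrix.mulVec_mulVec, hGM, Matrix.one_mulVec, sub_self]
end

section
/- Let Ω, Λ ∈ ℂ^{1×m} be linearly independent row vectors and let M ∈ ℂ^{n×n} be nonsingular. Then the matrix F = Ωᵀ Λ ⊗ M + Λᵀ Ω ⊗ Mᵀ ∈ ℂ^{mn×mn} has rank exactly 2n. -/
open Matrix Kronecker

/-- From linear independence of two vectors, get dual vectors. -/
lemma exists_dual_pair {m : ℕ} (Om Lam : Fin m → ℂ)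
    (h : LinearIndependent ℂ ![Om, Lam]) :
    ∃ a b : Fin m → ℂ,
      (∑ i, Om i * a i) = 1 ∧ (∑ i, Lam i * a i) = 0 ∧
      (∑ i, Om i * b i) = 0 ∧ (∑ i, Lam i * b i) = 1 := by
  classical
  let f : (Fin 2 → ℂ) →ₗ[ℂ] (Fin m → ℂ) :=
    { toFun := fun c => c 0 • Om + c 1 • Lam
      map_add' := by
        intro x y
        simp only [Pi.add_apply, add_smul]
        abel
      map_smul' := by
        intro r x
        simp [smul_smul, smul_add] }
  have hker : LinearMap.ker f = ⊥ := by
    rw [LinearMap.ker_eq_bot']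
    intro c hc
    have hsum : ∑ i : Fin 2, c i • ![Om, Lam] i = 0 := by
      rw [Fin.sum_univ_two]
      exact hc
    have h0 := Fintype.linearIndependent_iff.mp h c hsum
    funext i
    exact h0 i
  obtain ⟨g, hg⟩ := f.exists_leftInverse_of_injective hker
  have key : ∀ x : Fin m → ℂ, g x = ∑ i, x i • g (Pi.single i 1) := by
    intro x
    conv_lhs => rw [← Finset.univ_sum_single x]
    rw [map_sum]
    congr 1
    funext i
    rw [← g.map_smul]
    congr 1
    rw [← Pi.single_smul, smul_eq_mul, mul_one]
  have hOm : g Om = Pi.single 0 1 := by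
    have hfo : f (Pi.single 0 1) = Om := by simp [f]
    calc g Om = g (f (Pi.single 0 1)) := by rw [hfo]
      _ = Pi.single 0 1 := by
          have := LinearMap.congr_fun hg (Pi.single 0 1)
          simpa using this
  have hLam : g Lam = Pi.single 1 1 := by
    have hfl : f (Pi.single 1 1) = Lam := by simp [f]
    calc g Lam = g (f (Pi.single 1 1)) := by rw [hfl]
      _ = Pi.single 1 1 := by
          have := LinearMap.congr_fun hg (Pi.single 1 1)
          simpa using this
  refine ⟨fun i => g (Pi.single i 1) 0, fun i => g (Pi.single i 1) 1, ?_, ?_, ?_, ?_⟩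
  · have := congrFun (key Om) 0
    rw [hOm] at this
    simpa [Finset.sum_apply] using this.symm
  · have := congrFun (key Lam) 0
    rw [hLam] at this
    simpa [Finset.sum_apply] using this.symm
  · have := congrFun (key Om) 1
    rw [hOm] at this
    simpa [Finset.sum_apply] using this.symm
  · have := congrFun (key Lam) 1
    rw [hLam] at this
    simpa [Finset.sum_apply] using this.symm

open Matrix Kronecker in
/-- If row vectors `Ω, Λ ∈ ℂ^{1×m}` are linearly independent and `M ∈ ℂ^{n×n}` is
nonsingular, then `F = Ωᵀ Λ ⊗ M + Λᵀ Ω ⊗ Mᵀ` has rank exactly `2n`. -/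
theorem rank_vecMulVec_kronecker_add {m n : ℕ}
    (Om Lam : Fin m → ℂ) (h : LinearIndependent ℂ ![Om, Lam])
    (M : Matrix (Fin n) (Fin n) ℂ) (hM : IsUnit M) :
    ((vecMulVec Om Lam) ⊗ₖ M + (vecMulVec Lam Om) ⊗ₖ Mᵀ).rank = 2 * n := by
  classical
  obtain ⟨a, b, ha1, ha2, hb1, hb2⟩ := exists_dual_pair Om Lam h
  have hdet : IsUnit M.det := (Matrix.isUnit_iff_isUnit_det M).mp hM
  have hdetT : IsUnit Mᵀ.det := by rwa [Matrix.det_transpose]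
  set F := (vecMulVec Om Lam) ⊗ₖ M + (vecMulVec Lam Om) ⊗ₖ Mᵀ with hF
  -- factorization F = P * Q
  let P : Matrix (Fin m × Fin n) (Fin 2 × Fin n) ℂ :=
    fun p q => if q.1 = 0 then Om p.1 * M p.2 q.2 else Lam p.1 * Mᵀ p.2 q.2
  let Q : Matrix (Fin 2 × Fin n) (Fin m × Fin n) ℂ :=
    fun q p => (if q.1 = 0 then Lam p.1 else Om p.1) * (if q.2 = p.2 then 1 else 0)
  let X : Matrix (Fin m × Fin n) (Fin 2 × Fin n) ℂ :=
    fun p q => (if q.1 = 0 then b p.1 else a p.1) * (if p.2 = q.2 then 1 else 0)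
  let Y : Matrix (Fin 2 × Fin n) (Fin m × Fin n) ℂ :=
    fun q p => if q.1 = 0 then a p.1 * M⁻¹ q.2 p.2 else b p.1 * Mᵀ⁻¹ q.2 p.2
  have hPQ : P * Q = F := by
    ext ⟨i, k⟩ ⟨j, k'⟩
    rw [Matrix.mul_apply]
    rw [Fintype.sum_prod_type]
    rw [Fin.sum_univ_two]
    have e0 : ((0 : Fin 2) = 0) = True := by simp
    have e1 : ((1 : Fin 2) = 0) = False := by simp
    simp only [P, Q, e0, e1, if_true, if_false, hF, Matrix.add_apply,
      Matrix.kroneckerMap_apply, Matrix.vecMulVec_apply, Matrix.transpose_apply]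
    have h0 : ∑ l : Fin n, Om i * M k l * (Lam j * if l = k' then 1 else 0)
        = Om i * Lam j * M k k' := by
      rw [Finset.sum_eq_single k']
      · simp; ring
      · intro l _ hl; simp [hl]
      · intro habs; exact absurd (Finset.mem_univ k') habs
    have h1 : ∑ l : Fin n, Lam i * M l k * (Om j * if l = k' then 1 else 0)
        = Lam i * Om j * M k' k := by
      rw [Finset.sum_eq_single k']
      · simp; ring
      · intro l _ hl; simp [hl]
      · intro habs; exact absurd (Finset.mem_univ k') habs
    rw [h0, h1]
  have hQX : Q * X = 1 := by
    ext ⟨s, l⟩ ⟨t, l'⟩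
    rw [Matrix.mul_apply, Fintype.sum_prod_type]
    simp only [Q, X]
    have inner : ∀ i : Fin m, ∑ k : Fin n,
        ((if s = 0 then Lam i else Om i) * if l = k then 1 else 0) *
        ((if t = 0 then b i else a i) * if k = l' then 1 else 0)
        = (if s = 0 then Lam i else Om i) * (if t = 0 then b i else a i) *
          (if l = l' then 1 else 0) := by
      intro i
      rw [Finset.sum_eq_single l]
      · by_cases hll : l = l' <;> simp [hll] <;> ring
      · intro k _ hk; simp [Ne.symm hk]
      · intro habs; exact absurd (Finset.mem_univ l) habs
    simp only [inner]
    rw [← Finset.sum_mul]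
    have hone : (1 : Matrix (Fin 2 × Fin n) (Fin 2 × Fin n) ℂ) (s, l) (t, l') =
        (if s = t then 1 else 0) * (if l = l' then 1 else 0) := by
      by_cases hst : s = t <;> by_cases hll : l = l' <;>
        simp [Matrix.one_apply, hst, hll, Prod.ext_iff]
    rw [hone]
    congr 1
    fin_cases s <;> fin_cases t <;> simp [ha1, ha2, hb1, hb2, mul_comm]
  have hYP : Y * P = 1 := by
    ext ⟨s, l⟩ ⟨t, l'⟩
    rw [Matrix.mul_apply, Fintype.sum_prod_type]
    simp only [Y, P]
    have hMinv : M⁻¹ * M = 1 := Matrix.nonsing_inv_mul M hdet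
    have hMTinv : Mᵀ⁻¹ * Mᵀ = 1 := Matrix.nonsing_inv_mul Mᵀ hdetT
    have hone : (1 : Matrix (Fin 2 × Fin n) (Fin 2 × Fin n) ℂ) (s, l) (t, l') =
        (if s = t then 1 else 0) * ((1 : Matrix (Fin n) (Fin n) ℂ) l l') := by
      by_cases hst : s = t <;> by_cases hll : l = l' <;>
        simp [Matrix.one_apply, hst, hll, Prod.ext_iff]
    rw [hone]
    have e0 : ((0 : Fin 2) = 0) = True := by simp
    have e1 : ((1 : Fin 2) = 0) = False := by simp
    have e2 : ((0 : Fin 2) = 1) = False := by simp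
    have e3 : ((1 : Fin 2) = 1) = True := by simp
    rcases (by omega : s = 0 ∨ s ≠ 0) with hs | hs <;>
      rcases (by omega : t = 0 ∨ t ≠ 0) with ht | ht
    · -- s = 0, t = 0
      subst hs; subst ht
      simp only [e0, if_true]
      have : ∀ i : Fin m, ∑ k : Fin n, a i * M⁻¹ l k * (Om i * M k l')
          = Om i * a i * (M⁻¹ * M) l l' := by
        intro i; rw [Matrix.mul_apply, Finset.mul_sum]; congr 1; funext k; ring
      simp only [this]
      rw [← Finset.sum_mul, ha1, hMinv]
    · -- s = 0, t = 1
      subst hs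
      rw [Fin.eq_one_of_ne_zero t ht]
      simp only [e0, e1, e2, if_true, if_false]
      have : ∀ i : Fin m, ∑ k : Fin n, a i * M⁻¹ l k * (Lam i * Mᵀ k l')
          = Lam i * a i * (M⁻¹ * Mᵀ) l l' := by
        intro i; rw [Matrix.mul_apply, Finset.mul_sum]; congr 1; funext k; ring
      simp only [this]
      rw [← Finset.sum_mul, ha2]
      simp
    · -- s = 1, t = 0
      subst ht
      rw [Fin.eq_one_of_ne_zero s hs]
      simp only [e0, e1, e2, if_true, if_false]
      have : ∀ i : Fin m, ∑ k : Fin n, b i * Mᵀ⁻¹ l k * (Om i * M k l')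
          = Om i * b i * (Mᵀ⁻¹ * M) l l' := by
        intro i; rw [Matrix.mul_apply, Finset.mul_sum]; congr 1; funext k; ring
      simp only [this]
      rw [← Finset.sum_mul, hb1]
      simp
    · -- s = 1, t = 1
      rw [Fin.eq_one_of_ne_zero s hs, Fin.eq_one_of_ne_zero t ht]
      simp only [e1, e3, if_true, if_false]
      have : ∀ i : Fin m, ∑ k : Fin n, b i * Mᵀ⁻¹ l k * (Lam i * Mᵀ k l')
          = Lam i * b i * (Mᵀ⁻¹ * Mᵀ) l l' := by
        intro i; rw [Matrix.mul_apply, Finset.mul_sum]; congr 1; funext k; ring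
      simp only [this]
      rw [← Finset.sum_mul, hb2, hMTinv]
  have hcard : Fintype.card (Fin 2 × Fin n) = 2 * n := by simp
  apply le_antisymm
  · calc F.rank = (P * Q).rank := by rw [hPQ]
      _ ≤ Q.rank := Matrix.rank_mul_le_right P Q
      _ ≤ Fintype.card (Fin 2 × Fin n) := Matrix.rank_le_card_height Q
      _ = 2 * n := hcard
  · calc 2 * n = (1 : Matrix (Fin 2 × Fin n) (Fin 2 × Fin n) ℂ).rank := by
          rw [Matrix.rank_one, hcard]
      _ = (Y * P).rank := by rw [hYP]
      _ = (Y * (P * (Q * X))).rank := by rw [hQX, Matrix.mul_one]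
      _ = ((Y * (P * Q)) * X).rank := by rw [Matrix.mul_assoc, Matrix.mul_assoc]
      _ ≤ (P * Q).rank := le_trans (Matrix.rank_mul_le_left _ X)
          (Matrix.rank_mul_le_right Y (P * Q))
      _ = F.rank := by rw [hPQ]
end

section
/- Let x, y ∈ ℂⁿ with x ≠ 0. There exists a skew-symmetric matrix Δ ∈ ℂ^{n×n} (Δᵀ = −Δ) with Δx = y if and only if xᵀy = 0. Moreover, when xᵀy = 0, the minimal spectral norm of such a Δ equals ‖y‖/‖x‖. -/
/-- The spectral (operator 2-) norm of a complex matrix. -/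
noncomputable def specNorm {n : ℕ} (A : Matrix (Fin n) (Fin n) ℂ) : ℝ :=
  ‖Matrix.toEuclideanCLM (𝕜 := ℂ) A‖

/-- The Euclidean norm of a complex vector. -/
noncomputable def evNorm {n : ℕ} (v : Fin n → ℂ) : ℝ :=
  ‖(WithLp.equiv 2 (Fin n → ℂ)).symm v‖

open Matrix ComplexConjugate

noncomputable def eVec {n : ℕ} (v : Fin n → ℂ) : EuclideanSpace ℂ (Fin n) :=
  (WithLp.equiv 2 (Fin n → ℂ)).symm v

section aux

variable {n : ℕ}

lemma evNorm_eq (v : Fin n → ℂ) : evNorm v = ‖eVec v‖ := rfl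

lemma evNorm_pos {x : Fin n → ℂ} (hx : x ≠ 0) : 0 < evNorm x := by
  rw [evNorm, norm_pos_iff]
  intro h
  exact hx (by simpa using congrArg (WithLp.equiv 2 (Fin n → ℂ)) h)

lemma inner_eVec (a b : Fin n → ℂ) :
    (inner ℂ (eVec a) (eVec b) : ℂ) = ∑ j, conj (a j) * b j := by
  simp [eVec, PiLp.inner_apply, RCLike.inner_apply, mul_comm]

lemma clm_apply (A : Matrix (Fin n) (Fin n) ℂ) (v : Fin n → ℂ) :
    Matrix.toEuclideanCLM (𝕜 := ℂ) A (eVec v) = eVec (A.mulVec v) := by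
  simp [eVec, Matrix.toLin'_apply]

lemma lower_bound {x y : Fin n → ℂ} (hx : x ≠ 0) {Δ : Matrix (Fin n) (Fin n) ℂ}
    (h : Δ.mulVec x = y) : evNorm y / evNorm x ≤ specNorm Δ := by
  have hx' : 0 < evNorm x := evNorm_pos hx
  rw [div_le_iff₀ hx']
  have h2 := (Matrix.toEuclideanCLM (𝕜 := ℂ) Δ).le_opNorm (eVec x)
  rwa [clm_apply, h, ← evNorm_eq, ← evNorm_eq] at h2

lemma bessel_two {E : Type*} [NormedAddCommGroup E] [InnerProductSpace ℂ E]
    (a b v : E) (hab : (inner ℂ a b : ℂ) = 0) :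
    ‖(inner ℂ a v : ℂ)‖ ^ 2 * ‖b‖ ^ 2 + ‖(inner ℂ b v : ℂ)‖ ^ 2 * ‖a‖ ^ 2 ≤
      ‖a‖ ^ 2 * ‖b‖ ^ 2 * ‖v‖ ^ 2 := by
  rcases eq_or_ne a 0 with rfl | ha
  · simp
  have ha' : (0:ℝ) < ‖a‖ := norm_pos_iff.mpr ha
  have ha2 : (inner ℂ a a : ℂ) ≠ 0 := inner_self_ne_zero.mpr ha
  have hnaa : ‖(inner ℂ a a : ℂ)‖ = ‖a‖ ^ 2 := by
    rw [inner_self_eq_norm_sq_to_K, norm_pow, RCLike.norm_ofReal, abs_norm]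
  set c : ℂ := (inner ℂ a v : ℂ) / (inner ℂ a a : ℂ) with hc
  set w := v - c • a with hw
  have haw : (inner ℂ a w : ℂ) = 0 := by
    rw [hw, inner_sub_right, inner_smul_right, hc, div_mul_cancel₀ _ ha2, sub_self]
  have hbw : (inner ℂ b w : ℂ) = (inner ℂ b v : ℂ) := by
    have hba : (inner ℂ b a : ℂ) = 0 := by
      rw [← inner_conj_symm, hab, map_zero]
    rw [hw, inner_sub_right, inner_smul_right, hba, mul_zero, sub_zero]
  have hwca : RCLike.re (inner ℂ w (c • a) : ℂ) = 0 := by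
    rw [inner_smul_right, ← inner_conj_symm, haw, map_zero, mul_zero]
    simp
  have hpyth : ‖v‖ ^ 2 = ‖w‖ ^ 2 + ‖c • a‖ ^ 2 := by
    have hv : v = w + c • a := by rw [hw]; abel
    calc ‖v‖ ^ 2 = ‖w + c • a‖ ^ 2 := by rw [← hv]
    _ = ‖w‖ ^ 2 + 2 * RCLike.re (inner ℂ w (c • a) : ℂ) + ‖c • a‖ ^ 2 := norm_add_sq (𝕜 := ℂ) w (c • a)
    _ = ‖w‖ ^ 2 + ‖c • a‖ ^ 2 := by rw [hwca]; ring
  have hnc : ‖c‖ = ‖(inner ℂ a v : ℂ)‖ / ‖a‖ ^ 2 := by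
    rw [hc, norm_div, hnaa]
  have hca : ‖c • a‖ ^ 2 = ‖(inner ℂ a v : ℂ)‖ ^ 2 / ‖a‖ ^ 2 := by
    rw [norm_smul, hnc, mul_pow, div_pow]
    field_simp
    try ring
  have hcs : ‖(inner ℂ b v : ℂ)‖ ≤ ‖b‖ * ‖w‖ := by
    rw [← hbw]; exact norm_inner_le_norm b w
  have h1 : ‖(inner ℂ b v : ℂ)‖ ^ 2 ≤ ‖b‖ ^ 2 * ‖w‖ ^ 2 := by
    rw [← mul_pow]
    exact pow_le_pow_left₀ (norm_nonneg _) hcs 2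
  have h2 : ‖w‖ ^ 2 * ‖a‖ ^ 2 = ‖v‖ ^ 2 * ‖a‖ ^ 2 - ‖(inner ℂ a v : ℂ)‖ ^ 2 := by
    rw [hpyth, hca]
    field_simp
    try ring
  nlinarith [sq_nonneg ‖b‖, norm_nonneg b, sq_nonneg ‖(inner ℂ a v : ℂ)‖]


lemma evNorm_star (x : Fin n → ℂ) : evNorm (star x) = evNorm x := by
  rw [evNorm, evNorm, EuclideanSpace.norm_eq, EuclideanSpace.norm_eq]
  simp [PiLp.toLp_apply]

lemma delta_mulVec (x y v : Fin n → ℂ) (N : ℝ) :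
    (Matrix.of fun i j => (y i * conj (x j) - conj (x i) * y j) / (N : ℂ)).mulVec v =
      ((∑ j, conj (x j) * v j) / (N : ℂ)) • y -
        ((∑ j, y j * v j) / (N : ℂ)) • star x := by
  funext i
  simp only [Matrix.mulVec, dotProduct, Matrix.of_apply, Pi.sub_apply, Pi.smul_apply,
    Pi.star_apply, smul_eq_mul, Complex.star_def]
  have h : ∀ j, (y i * conj (x j) - conj (x i) * y j) / (N : ℂ) * v j
      = conj (x j) * v j * (y i / (N : ℂ)) - y j * v j * (conj (x i) / (N : ℂ)) := by
    intro j; ring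
  rw [Finset.sum_congr rfl fun j _ => h j, Finset.sum_sub_distrib, ← Finset.sum_mul,
    ← Finset.sum_mul]
  ring


lemma conj_dot (a b : Fin n → ℂ) :
    (∑ j, conj (a j) * conj (b j)) = conj (∑ j, a j * b j) := by
  rw [map_sum]
  exact Finset.sum_congr rfl fun j _ => ((starRingEnd ℂ).map_mul (a j) (b j)).symm

lemma exists_delta {x y : Fin n → ℂ} (hx : x ≠ 0) (hxy : x ⬝ᵥ y = 0) :
    ∃ Δ : Matrix (Fin n) (Fin n) ℂ,
      Δᵀ = -Δ ∧ Δ.mulVec x = y ∧ specNorm Δ = evNorm y / evNorm x := by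
  set nx := evNorm x with hnx
  set ny := evNorm y with hny
  have hnx0 : 0 < nx := evNorm_pos hx
  have hny0 : 0 ≤ ny := by rw [hny, evNorm]; exact norm_nonneg _
  set N : ℝ := nx ^ 2 with hNdef
  have hN0 : 0 < N := by positivity
  have hN' : (N : ℂ) ≠ 0 := by
    simpa using Complex.ofReal_ne_zero.mpr hN0.ne'
  set Δ : Matrix (Fin n) (Fin n) ℂ :=
    Matrix.of fun i j => (y i * conj (x j) - conj (x i) * y j) / (N : ℂ) with hΔ
  have hskew : Δᵀ = -Δ := by
    ext i j
    simp only [hΔ, Matrix.transpose_apply, Matrix.neg_apply, Matrix.of_apply]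
    ring
  have hs1 : (∑ j, conj (x j) * x j) = (N : ℂ) := by
    rw [← inner_eVec x x, inner_self_eq_norm_sq_to_K, ← evNorm_eq, ← hnx, hNdef]
    push_cast
    rfl
  have hs2 : (∑ j, y j * x j) = 0 := by
    rw [← hxy, dotProduct]
    exact Finset.sum_congr rfl fun j _ => mul_comm _ _
  have hmv : Δ.mulVec x = y := by
    rw [hΔ, delta_mulVec, hs1, hs2, div_self hN']
    simp
  have hsx : ‖eVec (star x)‖ = nx := by rw [← evNorm_eq, evNorm_star, hnx]
  have hsy : ‖eVec (star y)‖ = ny := by rw [← evNorm_eq, evNorm_star, hny]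
  have hex : ‖eVec x‖ = nx := by rw [← evNorm_eq, hnx]
  have hey : ‖eVec y‖ = ny := by rw [← evNorm_eq, hny]
  have upper : specNorm Δ ≤ ny / nx := by
    rw [specNorm]
    apply ContinuousLinearMap.opNorm_le_bound _ (div_nonneg hny0 hnx0.le)
    intro V
    set v : Fin n → ℂ := WithLp.equiv 2 (Fin n → ℂ) V with hv
    have hVv : eVec v = V := (WithLp.equiv 2 (Fin n → ℂ)).symm_apply_apply V
    set s : ℂ := ∑ j, conj (x j) * v j with hs
    set t : ℂ := ∑ j, y j * v j with ht
    have hsplit : eVec (Δ.mulVec v) =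
        (s / (N : ℂ)) • eVec y - (t / (N : ℂ)) • eVec (star x) := by
      rw [hΔ, delta_mulVec]
      rfl
    have hcross : (inner ℂ ((s / (N : ℂ)) • eVec y) ((t / (N : ℂ)) • eVec (star x)) : ℂ) = 0 := by
      rw [inner_smul_left, inner_smul_right, inner_eVec]
      have : (∑ j, conj (y j) * star x j) = 0 := by
        have h2 : (∑ j, conj (y j) * star x j) = conj (∑ j, y j * x j) := by
          rw [← conj_dot]
          rfl
        rw [h2, hs2, map_zero]
      rw [this, mul_zero, mul_zero]
    have hnormsq : ‖eVec (Δ.mulVec v)‖ ^ 2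
        = (‖s‖ ^ 2 * ny ^ 2 + ‖t‖ ^ 2 * nx ^ 2) / N ^ 2 := by
      rw [hsplit, norm_sub_sq (𝕜 := ℂ), hcross]
      simp only [norm_smul, norm_div, Complex.norm_real, map_zero, mul_zero]
      rw [Real.norm_eq_abs, abs_of_pos hN0, hey, hsx]
      field_simp
      ring
    have hab : (inner ℂ (eVec x) (eVec (star y)) : ℂ) = 0 := by
      rw [inner_eVec]
      have h2 : (∑ j, conj (x j) * star y j) = conj (∑ j, x j * y j) := by
        rw [← conj_dot]
        rfl
      rw [h2, show (∑ j, x j * y j) = x ⬝ᵥ y from rfl, hxy, map_zero]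
    have hbes := bessel_two (eVec x) (eVec (star y)) V hab
    have hsv : (inner ℂ (eVec x) V : ℂ) = s := by rw [← hVv, inner_eVec]
    have htv : (inner ℂ (eVec (star y)) V : ℂ) = t := by
      rw [← hVv, inner_eVec, ht]
      exact Finset.sum_congr rfl fun j _ => by simp
    rw [hsv, htv, hex, hsy] at hbes
    have hkey : ‖eVec (Δ.mulVec v)‖ ^ 2 ≤ (ny / nx * ‖V‖) ^ 2 := by
      rw [hnormsq, hNdef]
      rw [div_le_iff₀ (pow_pos (pow_pos hnx0 2) 2)]
      calc ‖s‖ ^ 2 * ny ^ 2 + ‖t‖ ^ 2 * nx ^ 2 ≤ nx ^ 2 * ny ^ 2 * ‖V‖ ^ 2 := hbes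
      _ = (ny / nx * ‖V‖) ^ 2 * (nx ^ 2) ^ 2 := by field_simp
    have hfin := le_of_pow_le_pow_left₀ two_ne_zero
      (mul_nonneg (div_nonneg hny0 hnx0.le) (norm_nonneg _)) hkey
    rw [← hVv] at hfin ⊢
    rw [clm_apply]
    exact hfin
  exact ⟨Δ, hskew, hmv, le_antisymm upper (lower_bound hx hmv)⟩

end aux

open Matrix in
/-- Skew-symmetric mapping theorem: for `x ≠ 0` there is a skew-symmetric `Δ` with
`Δx = y` iff `xᵀy = 0`, and then the minimal spectral norm of such `Δ` is `‖y‖/‖x‖`. -/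
theorem skewSymmetric_mapping {n : ℕ} (x y : Fin n → ℂ) (hx : x ≠ 0) :
    ((∃ Δ : Matrix (Fin n) (Fin n) ℂ, Δᵀ = -Δ ∧ Δ.mulVec x = y) ↔ x ⬝ᵥ y = 0) ∧
    (x ⬝ᵥ y = 0 →
      IsLeast {r : ℝ | ∃ Δ : Matrix (Fin n) (Fin n) ℂ,
          Δᵀ = -Δ ∧ Δ.mulVec x = y ∧ specNorm Δ = r}
        (evNorm y / evNorm x)) := by
  have fwd : ∀ Δ : Matrix (Fin n) (Fin n) ℂ, Δᵀ = -Δ → Δ.mulVec x = y → x ⬝ᵥ y = 0 := by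
    intro Δ hskew hmv
    have h3 : x ⬝ᵥ y = -(x ⬝ᵥ y) := by
      conv_lhs => rw [← hmv]
      rw [Matrix.dotProduct_mulVec, ← Matrix.mulVec_transpose, hskew, Matrix.neg_mulVec, hmv,
        neg_dotProduct, dotProduct_comm]
    have h4 : (2 : ℂ) * (x ⬝ᵥ y) = 0 := by linear_combination h3
    rcases mul_eq_zero.mp h4 with h | h
    · exact absurd h two_ne_zero
    · exact h
  constructor
  · constructor
    · rintro ⟨Δ, hskew, hmv⟩
      exact fwd Δ hskew hmv
    · intro hxy
      obtain ⟨Δ, h1, h2, _⟩ := exists_delta hx hxy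
      exact ⟨Δ, h1, h2⟩
  · intro hxy
    constructor
    · obtain ⟨Δ, h1, h2, h3⟩ := exists_delta hx hxy
      exact ⟨Δ, h1, h2, h3⟩
    · rintro r ⟨Δ, h1, h2, rfl⟩
      exact lower_bound hx h2
end

section
/- Let G(z) = Σ_{p=0}^d z^p A_p + Σ_{j=1}^k w_j(z) E_j be an n×n rational matrix polynomial and λ ∈ ℂ with all w_j(λ) defined. Then the unstructured eigenvalue backward error η(G,λ), defined as the infimum of ‖(ΔA₀,…,ΔA_d,ΔE₁,…,ΔE_k)‖ over all matrix tuples making det(Σ_p λ^p(A_p − ΔA_p) + Σ_j w_j(λ)(E_j − ΔE_j)) = 0, equals σ_min(G(λ)) / ‖(1, λ, …, λ^d, w₁(λ), …, w_k(λ))‖. -/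
set_option synthInstance.maxHeartbeats 1000000
set_option maxHeartbeats 1000000


/-- The smallest singular value of a complex matrix. -/
noncomputable def sigmaMin {n : ℕ} (A : Matrix (Fin n) (Fin n) ℂ) : ℝ :=
  sInf {r : ℝ | ∃ x : Fin n → ℂ, evNorm x = 1 ∧ r = evNorm (A.mulVec x)}

namespace BE
open Matrix

variable {n : ℕ}

lemma evNorm_nonneg (v : Fin n → ℂ) : 0 ≤ evNorm v := norm_nonneg _

lemma specNorm_nonneg (A : Matrix (Fin n) (Fin n) ℂ) : 0 ≤ specNorm A := norm_nonneg _

lemma clm_apply (A : Matrix (Fin n) (Fin n) ℂ) (x : Fin n → ℂ) :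
    Matrix.toEuclideanCLM (𝕜 := ℂ) A ((WithLp.equiv 2 (Fin n → ℂ)).symm x)
      = (WithLp.equiv 2 (Fin n → ℂ)).symm (A.mulVec x) := by
  exact Matrix.toEuclideanCLM_toLp A x

lemma evNorm_mulVec_le (A : Matrix (Fin n) (Fin n) ℂ) (x : Fin n → ℂ) :
    evNorm (A.mulVec x) ≤ specNorm A * evNorm x := by
  rw [evNorm, ← clm_apply]
  exact (Matrix.toEuclideanCLM (𝕜 := ℂ) A).le_opNorm _

lemma specNorm_smul (c : ℂ) (A : Matrix (Fin n) (Fin n) ℂ) :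
    specNorm (c • A) = ‖c‖ * specNorm A := by
  rw [specNorm, _root_.map_smul]
  exact norm_smul c (Matrix.toEuclideanCLM (𝕜 := ℂ) A)

lemma specNorm_sum_le {ι : Type*} (s : Finset ι) (f : ι → Matrix (Fin n) (Fin n) ℂ) :
    specNorm (∑ i ∈ s, f i) ≤ ∑ i ∈ s, specNorm (f i) := by
  rw [specNorm, map_sum]
  exact norm_sum_le _ _

lemma evNorm_eq_zero {v : Fin n → ℂ} : evNorm v = 0 ↔ v = 0 := by
  rw [evNorm, norm_eq_zero]
  constructor
  · intro h
    simpa using congrArg (WithLp.equiv 2 (Fin n → ℂ)) h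
  · rintro rfl; rfl

/-- rank-one outer product u v* -/
noncomputable def outer (u v : Fin n → ℂ) : Matrix (Fin n) (Fin n) ℂ :=
  Matrix.vecMulVec u (fun j => starRingEnd ℂ (v j))

lemma outer_mulVec (u v x : Fin n → ℂ) :
    (outer u v).mulVec x = (∑ j, starRingEnd ℂ (v j) * x j) • u := by
  funext i
  simp [outer, Matrix.mulVec, Matrix.vecMulVec, dotProduct, Finset.mul_sum, mul_assoc,
    mul_comm, mul_left_comm]

lemma evNorm_smul (c : ℂ) (v : Fin n → ℂ) :
    evNorm (c • v) = ‖c‖ * evNorm v := by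
  rw [evNorm, evNorm]
  exact norm_smul c _

lemma inner_abs_le (v x : Fin n → ℂ) :
    ‖∑ j, starRingEnd ℂ (v j) * x j‖ ≤ evNorm v * evNorm x := by
  have h := norm_inner_le_norm (𝕜 := ℂ)
    ((WithLp.equiv 2 (Fin n → ℂ)).symm v) ((WithLp.equiv 2 (Fin n → ℂ)).symm x)
  rw [PiLp.inner_apply] at h
  simpa [RCLike.inner_apply, evNorm, mul_comm] using h

lemma specNorm_outer_le (u v : Fin n → ℂ) :
    specNorm (outer u v) ≤ evNorm u * evNorm v := by
  rw [specNorm]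
  apply ContinuousLinearMap.opNorm_le_bound _ (mul_nonneg (evNorm_nonneg u) (evNorm_nonneg v))
  intro y
  obtain ⟨x, rfl⟩ : ∃ x : Fin n → ℂ, (WithLp.equiv 2 (Fin n → ℂ)).symm x = y :=
    ⟨WithLp.equiv 2 (Fin n → ℂ) y, by simp⟩
  rw [clm_apply, outer_mulVec]
  have h1 : ‖(WithLp.equiv 2 (Fin n → ℂ)).symm ((∑ j, starRingEnd ℂ (v j) * x j) • u)‖
      = ‖∑ j, starRingEnd ℂ (v j) * x j‖ * evNorm u := evNorm_smul _ _
  rw [h1]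
  calc ‖∑ j, starRingEnd ℂ (v j) * x j‖ * evNorm u
      ≤ (evNorm v * evNorm x) * evNorm u :=
        mul_le_mul_of_nonneg_right (inner_abs_le v x) (evNorm_nonneg u)
    _ = evNorm u * evNorm v * ‖(WithLp.equiv 2 (Fin n → ℂ)).symm x‖ := by
        rw [show ‖(WithLp.equiv 2 (Fin n → ℂ)).symm x‖ = evNorm x from rfl]; ring

lemma sigmaMin_exists (hn : 0 < n) (A : Matrix (Fin n) (Fin n) ℂ) :
    ∃ x : Fin n → ℂ, evNorm x = 1 ∧ sigmaMin A = evNorm (A.mulVec x) ∧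
      ∀ y : Fin n → ℂ, evNorm y = 1 → evNorm (A.mulVec x) ≤ evNorm (A.mulVec y) := by
  have hcpt : IsCompact (Metric.sphere (0 : EuclideanSpace ℂ (Fin n)) 1) :=
    isCompact_sphere 0 1
  have hne : (Metric.sphere (0 : EuclideanSpace ℂ (Fin n)) 1).Nonempty := by
    refine ⟨EuclideanSpace.single ⟨0, hn⟩ (1 : ℂ), ?_⟩
    simp [EuclideanSpace.norm_single]
  have hcont : Continuous fun y : EuclideanSpace ℂ (Fin n) =>
      ‖Matrix.toEuclideanCLM (𝕜 := ℂ) A y‖ :=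
    (Matrix.toEuclideanCLM (𝕜 := ℂ) A).continuous.norm
  obtain ⟨y₀, hy₀mem, hy₀min⟩ := hcpt.exists_isMinOn hne hcont.continuousOn
  set x := WithLp.equiv 2 (Fin n → ℂ) y₀ with hxdef
  have hsymm : (WithLp.equiv 2 (Fin n → ℂ)).symm x = y₀ := by simp [hxdef]
  have hx1 : evNorm x = 1 := by
    rw [evNorm, hsymm]
    simpa [Metric.mem_sphere] using hy₀mem
  have hval : evNorm (A.mulVec x) = ‖Matrix.toEuclideanCLM (𝕜 := ℂ) A y₀‖ := by
    rw [evNorm, ← clm_apply, hsymm]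
  refine ⟨x, hx1, ?_, ?_⟩
  · -- sInf of the set equals this value
    apply IsLeast.csInf_eq
    constructor
    · exact ⟨x, hx1, rfl⟩
    · rintro r ⟨z, hz1, rfl⟩
      have hzmem : (WithLp.equiv 2 (Fin n → ℂ)).symm z ∈
          Metric.sphere (0 : EuclideanSpace ℂ (Fin n)) 1 := by
        simpa [Metric.mem_sphere, evNorm] using hz1
      have := hy₀min hzmem
      rw [hval]
      calc ‖Matrix.toEuclideanCLM (𝕜 := ℂ) A y₀‖
          ≤ ‖Matrix.toEuclideanCLM (𝕜 := ℂ) A ((WithLp.equiv 2 (Fin n → ℂ)).symm z)‖ := this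
        _ = evNorm (A.mulVec z) := by rw [clm_apply, evNorm]
  · intro y hy1
    have hymem : (WithLp.equiv 2 (Fin n → ℂ)).symm y ∈
        Metric.sphere (0 : EuclideanSpace ℂ (Fin n)) 1 := by
      simpa [Metric.mem_sphere, evNorm] using hy1
    have := hy₀min hymem
    rw [hval]
    calc ‖Matrix.toEuclideanCLM (𝕜 := ℂ) A y₀‖
        ≤ ‖Matrix.toEuclideanCLM (𝕜 := ℂ) A ((WithLp.equiv 2 (Fin n → ℂ)).symm y)‖ := this
      _ = evNorm (A.mulVec y) := by rw [clm_apply, evNorm]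

lemma sum_conj_mul_self {x : Fin n → ℂ} (hx : evNorm x = 1) :
    (∑ j, starRingEnd ℂ (x j) * x j) = 1 := by
  have hnorm : ∑ j, ‖x j‖ ^ 2 = 1 := by
    have h := hx
    rw [evNorm, EuclideanSpace.norm_eq] at h
    have hs : ∑ j, ‖(WithLp.equiv 2 (Fin n → ℂ)).symm x j‖ ^ 2 = 1 := by
      have := congrArg (· ^ 2) h
      simpa [Real.sq_sqrt (Finset.sum_nonneg fun j _ => sq_nonneg _)] using this
    simpa using hs
  have : ∀ j, starRingEnd ℂ (x j) * x j = ((‖x j‖ ^ 2 : ℝ) : ℂ) := by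
    intro j
    rw [← Complex.normSq_eq_conj_mul_self, Complex.sq_norm]
  rw [Finset.sum_congr rfl fun j _ => this j, ← Complex.ofReal_sum, hnorm, Complex.ofReal_one]

lemma specNorm_add_le (A B : Matrix (Fin n) (Fin n) ℂ) :
    specNorm (A + B) ≤ specNorm A + specNorm B := by
  rw [specNorm, map_add]
  exact norm_add_le _ _

end BE

open Matrix in
/-- Theorem 2.8: the unstructured eigenvalue backward error `η(G,λ)` equals
`σ_min(G(λ)) / ‖(1,λ,…,λ^d,w₁(λ),…,w_k(λ))‖`. -/
theorem unstructured_eigenvalue_backward_error {n d k : ℕ}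
    (A : Fin (d + 1) → Matrix (Fin n) (Fin n) ℂ)
    (E : Fin k → Matrix (Fin n) (Fin n) ℂ)
    (lam : ℂ) (w : Fin k → ℂ) :
    sInf {r : ℝ |
        ∃ (ΔA : Fin (d + 1) → Matrix (Fin n) (Fin n) ℂ)
          (ΔE : Fin k → Matrix (Fin n) (Fin n) ℂ),
          (∑ p : Fin (d + 1), lam ^ (p : ℕ) • (A p - ΔA p)
              + ∑ j, w j • (E j - ΔE j)).det = 0 ∧
          r = Real.sqrt (∑ p : Fin (d + 1), specNorm (ΔA p) ^ 2
              + ∑ j, specNorm (ΔE j) ^ 2)} =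
      sigmaMin (∑ p : Fin (d + 1), lam ^ (p : ℕ) • A p + ∑ j, w j • E j) /
        Real.sqrt (∑ p : Fin (d + 1), ‖lam ^ (p : ℕ)‖ ^ 2
          + ∑ j, ‖w j‖ ^ 2) := by
  classical
  set G := ∑ p : Fin (d + 1), lam ^ (p : ℕ) • A p + ∑ j, w j • E j with hG
  set N2 := ∑ p : Fin (d + 1), ‖lam ^ (p : ℕ)‖ ^ 2
      + ∑ j, ‖w j‖ ^ 2 with hN2def
  have hN2one : 1 ≤ N2 := by
    have h1 : (1 : ℝ) ≤ ∑ p : Fin (d + 1), ‖lam ^ (p : ℕ)‖ ^ 2 := by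
      have := Finset.single_le_sum
        (f := fun p : Fin (d + 1) => ‖lam ^ (p : ℕ)‖ ^ 2)
        (fun p _ => sq_nonneg _) (Finset.mem_univ (0 : Fin (d + 1)))
      simpa using this
    have h2 : (0 : ℝ) ≤ ∑ j, ‖w j‖ ^ 2 :=
      Finset.sum_nonneg fun j _ => sq_nonneg _
    linarith
  have hN2pos : 0 < N2 := lt_of_lt_of_le one_pos hN2one
  set N := Real.sqrt N2 with hNdef
  have hNpos : 0 < N := Real.sqrt_pos.mpr hN2pos
  rcases Nat.eq_zero_or_pos n with hn | hn
  · -- n = 0 : both sides are 0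
    subst hn
    have hS : {r : ℝ |
        ∃ (ΔA : Fin (d + 1) → Matrix (Fin 0) (Fin 0) ℂ)
          (ΔE : Fin k → Matrix (Fin 0) (Fin 0) ℂ),
          (∑ p : Fin (d + 1), lam ^ (p : ℕ) • (A p - ΔA p)
              + ∑ j, w j • (E j - ΔE j)).det = 0 ∧
          r = Real.sqrt (∑ p : Fin (d + 1), specNorm (ΔA p) ^ 2
              + ∑ j, specNorm (ΔE j) ^ 2)} = ∅ := by
      ext r
      simp only [Set.mem_setOf_eq, Set.mem_empty_iff_false, iff_false]
      rintro ⟨ΔA, ΔE, hdet, -⟩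
      rw [Matrix.det_isEmpty] at hdet
      exact one_ne_zero hdet
    have hsig : sigmaMin G = 0 := by
      rw [sigmaMin]
      convert Real.sInf_empty using 2
      ext r
      simp only [Set.mem_setOf_eq, Set.mem_empty_iff_false, iff_false]
      rintro ⟨x, hx1, -⟩
      have : x = 0 := Subsingleton.elim _ _
      rw [this, BE.evNorm_eq_zero.mpr rfl] at hx1
      exact one_ne_zero hx1.symm
    rw [hS, hsig, Real.sInf_empty, zero_div]
  · -- main case n > 0
    obtain ⟨x, hx1, hxval, hxmin⟩ := BE.sigmaMin_exists hn G
    have hxne : x ≠ 0 := by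
      intro h
      rw [h, BE.evNorm_eq_zero.mpr rfl] at hx1
      exact one_ne_zero hx1.symm
    set u := G.mulVec x with hu
    set B := BE.outer u x with hB
    set s := specNorm B with hs
    have hsle : s ≤ sigmaMin G := by
      rw [hxval]
      calc s ≤ evNorm u * evNorm x := BE.specNorm_outer_le u x
        _ = evNorm u := by rw [hx1, mul_one]
    have hN2ne : ((N2 : ℝ) : ℂ) ≠ 0 := by
      simp [Complex.ofReal_ne_zero, ne_of_gt hN2pos]
    -- the constructed perturbations
    set ΔA : Fin (d + 1) → Matrix (Fin n) (Fin n) ℂ :=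
      fun p => (starRingEnd ℂ (lam ^ (p : ℕ)) / (N2 : ℂ)) • B with hΔA
    set ΔE : Fin k → Matrix (Fin n) (Fin n) ℂ :=
      fun j => (starRingEnd ℂ (w j) / (N2 : ℂ)) • B with hΔE
    have key : (∑ p : Fin (d + 1), lam ^ (p : ℕ) * (starRingEnd ℂ (lam ^ (p : ℕ)) / (N2 : ℂ)))
        + ∑ j, w j * (starRingEnd ℂ (w j) / (N2 : ℂ)) = 1 := by
      simp only [← mul_div_assoc, ← Finset.sum_div]
      rw [← add_div, div_eq_one_iff_eq hN2ne]
      simp only [Complex.mul_conj, Complex.normSq_eq_norm_sq]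
      rw [hN2def]
      push_cast
      ring
    have hM : (∑ p : Fin (d + 1), lam ^ (p : ℕ) • ΔA p + ∑ j, w j • ΔE j) = B := by
      simp only [hΔA, hΔE, smul_smul]
      rw [← Finset.sum_smul, ← Finset.sum_smul, ← add_smul, key, one_smul]
    have hmatrix : ∀ (ΔA' : Fin (d + 1) → Matrix (Fin n) (Fin n) ℂ)
        (ΔE' : Fin k → Matrix (Fin n) (Fin n) ℂ),
        (∑ p : Fin (d + 1), lam ^ (p : ℕ) • (A p - ΔA' p) + ∑ j, w j • (E j - ΔE' j))
          = G - (∑ p : Fin (d + 1), lam ^ (p : ℕ) • ΔA' p + ∑ j, w j • ΔE' j) := by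
      intro ΔA' ΔE'
      simp only [smul_sub, Finset.sum_sub_distrib, hG]
      abel
    have hdet0 : (∑ p : Fin (d + 1), lam ^ (p : ℕ) • (A p - ΔA p)
        + ∑ j, w j • (E j - ΔE j)).det = 0 := by
      rw [hmatrix, hM]
      rw [← Matrix.exists_mulVec_eq_zero_iff]
      refine ⟨x, hxne, ?_⟩
      rw [Matrix.sub_mulVec, ← hu, hB, BE.outer_mulVec, BE.sum_conj_mul_self hx1, one_smul,
        sub_self]
    have hΔAnorm : ∀ p, specNorm (ΔA p) = ‖lam ^ (p : ℕ)‖ / N2 * s := by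
      intro p
      rw [hΔA]
      rw [BE.specNorm_smul]
      congr 1
      rw [norm_div, Complex.norm_conj, Complex.norm_real, Real.norm_eq_abs, abs_of_pos hN2pos]
    have hΔEnorm : ∀ j, specNorm (ΔE j) = ‖w j‖ / N2 * s := by
      intro j
      rw [hΔE, BE.specNorm_smul]
      congr 1
      rw [norm_div, Complex.norm_conj, Complex.norm_real, Real.norm_eq_abs, abs_of_pos hN2pos]
    have hval : Real.sqrt (∑ p : Fin (d + 1), specNorm (ΔA p) ^ 2
        + ∑ j, specNorm (ΔE j) ^ 2) = s / N := by
      have hsum : (∑ p : Fin (d + 1), specNorm (ΔA p) ^ 2 + ∑ j, specNorm (ΔE j) ^ 2)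
          = s ^ 2 / N2 := by
        simp only [hΔAnorm, hΔEnorm, div_pow, mul_pow]
        have hre : ∀ a : ℝ, a ^ 2 / N2 ^ 2 * s ^ 2 = a ^ 2 * (s ^ 2 / N2 ^ 2) :=
          fun a => by ring
        simp_rw [hre]
        rw [← Finset.sum_mul, ← Finset.sum_mul, ← add_mul, ← hN2def]
        field_simp
      rw [hsum, Real.sqrt_div (sq_nonneg s), Real.sqrt_sq (BE.specNorm_nonneg B), hNdef]
    apply le_antisymm
    · -- upper bound: the constructed perturbation is in the set
      have hbdd : BddBelow {r : ℝ |
          ∃ (ΔA' : Fin (d + 1) → Matrix (Fin n) (Fin n) ℂ)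
            (ΔE' : Fin k → Matrix (Fin n) (Fin n) ℂ),
            (∑ p : Fin (d + 1), lam ^ (p : ℕ) • (A p - ΔA' p)
                + ∑ j, w j • (E j - ΔE' j)).det = 0 ∧
            r = Real.sqrt (∑ p : Fin (d + 1), specNorm (ΔA' p) ^ 2
                + ∑ j, specNorm (ΔE' j) ^ 2)} := by
        refine ⟨0, ?_⟩
        rintro r ⟨ΔA', ΔE', -, rfl⟩
        exact Real.sqrt_nonneg _
      have hmem : s / N ∈ {r : ℝ |
          ∃ (ΔA' : Fin (d + 1) → Matrix (Fin n) (Fin n) ℂ)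
            (ΔE' : Fin k → Matrix (Fin n) (Fin n) ℂ),
            (∑ p : Fin (d + 1), lam ^ (p : ℕ) • (A p - ΔA' p)
                + ∑ j, w j • (E j - ΔE' j)).det = 0 ∧
            r = Real.sqrt (∑ p : Fin (d + 1), specNorm (ΔA' p) ^ 2
                + ∑ j, specNorm (ΔE' j) ^ 2)} := ⟨ΔA, ΔE, hdet0, hval.symm⟩
      exact le_trans (csInf_le hbdd hmem) ((div_le_div_iff_of_pos_right hNpos).mpr hsle)
    · -- lower bound
      refine le_csInf ⟨s / N, ΔA, ΔE, hdet0, hval.symm⟩ ?_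
      rintro r ⟨ΔA', ΔE', hdet', rfl⟩
      rw [hmatrix ΔA' ΔE'] at hdet'
      set M' := ∑ p : Fin (d + 1), lam ^ (p : ℕ) • ΔA' p + ∑ j, w j • ΔE' j with hM'
      obtain ⟨v, hv0, hv⟩ := (Matrix.exists_mulVec_eq_zero_iff).mpr hdet'
      have hvn : evNorm v ≠ 0 := fun h => hv0 (BE.evNorm_eq_zero.mp h)
      have hvpos : 0 < evNorm v := lt_of_le_of_ne (BE.evNorm_nonneg v) (Ne.symm hvn)
      set y := ((evNorm v : ℂ))⁻¹ • v with hy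
      have hy1 : evNorm y = 1 := by
        rw [hy, BE.evNorm_smul, norm_inv, Complex.norm_real, Real.norm_eq_abs, abs_of_pos hvpos,
          inv_mul_cancel₀ hvn]
      have hGy : G.mulVec y = M'.mulVec y := by
        have h0 : (G - M').mulVec y = 0 := by
          rw [hy, Matrix.mulVec_smul, hv, smul_zero]
        rw [Matrix.sub_mulVec] at h0
        exact sub_eq_zero.mp h0
      have hσ : sigmaMin G ≤ specNorm M' := by
        calc sigmaMin G = evNorm u := hxval
          _ ≤ evNorm (G.mulVec y) := hxmin y hy1
          _ = evNorm (M'.mulVec y) := by rw [hGy]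
          _ ≤ specNorm M' * evNorm y := BE.evNorm_mulVec_le M' y
          _ = specNorm M' := by rw [hy1, mul_one]
      have htri : specNorm M' ≤ ∑ p : Fin (d + 1), ‖lam ^ (p : ℕ)‖ * specNorm (ΔA' p)
          + ∑ j, ‖w j‖ * specNorm (ΔE' j) := by
        calc specNorm M'
            ≤ specNorm (∑ p : Fin (d + 1), lam ^ (p : ℕ) • ΔA' p)
              + specNorm (∑ j, w j • ΔE' j) := BE.specNorm_add_le _ _
          _ ≤ ∑ p : Fin (d + 1), specNorm (lam ^ (p : ℕ) • ΔA' p)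
              + ∑ j, specNorm (w j • ΔE' j) :=
              add_le_add (BE.specNorm_sum_le _ _) (BE.specNorm_sum_le _ _)
          _ = ∑ p : Fin (d + 1), ‖lam ^ (p : ℕ)‖ * specNorm (ΔA' p)
              + ∑ j, ‖w j‖ * specNorm (ΔE' j) := by
              simp_rw [BE.specNorm_smul]
      have hcs : ∑ p : Fin (d + 1), ‖lam ^ (p : ℕ)‖ * specNorm (ΔA' p)
          + ∑ j, ‖w j‖ * specNorm (ΔE' j)
          ≤ N * Real.sqrt (∑ p : Fin (d + 1), specNorm (ΔA' p) ^ 2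
              + ∑ j, specNorm (ΔE' j) ^ 2) := by
        have h := Real.sum_mul_le_sqrt_mul_sqrt (Finset.univ : Finset (Fin (d + 1) ⊕ Fin k))
          (Sum.elim (fun p => ‖lam ^ (p : ℕ)‖) (fun j => ‖w j‖))
          (Sum.elim (fun p => specNorm (ΔA' p)) (fun j => specNorm (ΔE' j)))
        rw [Fintype.sum_sum_type, Fintype.sum_sum_type, Fintype.sum_sum_type] at h
        simpa [hNdef, hN2def] using h
      have hfinal : sigmaMin G ≤ N * Real.sqrt (∑ p : Fin (d + 1), specNorm (ΔA' p) ^ 2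
          + ∑ j, specNorm (ΔE' j) ^ 2) := le_trans hσ (le_trans htri hcs)
      rw [div_le_iff₀ hNpos]
      calc sigmaMin G ≤ N * Real.sqrt (∑ p : Fin (d + 1), specNorm (ΔA' p) ^ 2
          + ∑ j, specNorm (ΔE' j) ^ 2) := hfinal
        _ = Real.sqrt (∑ p : Fin (d + 1), specNorm (ΔA' p) ^ 2
          + ∑ j, specNorm (ΔE' j) ^ 2) * N := mul_comm _ _
end

section
/- Let J, H₀, …, H_r ∈ ℂ^{n×n} be Hermitian. Suppose the minimum of L(t) = λ_max(J + Σⱼ tⱼHⱼ) over t ∈ ℝ^{r+1} is attained at t̂ and λ_max(Ĥ) is a simple eigenvalue of Ĥ := J + Σⱼ t̂ⱼHⱼ. Then any eigenvector u of Ĥ associated with λ_max(Ĥ) satisfies u*Hⱼu = 0 for all j = 0,…,r, and hence sup{ u*Ju/u*u : u ≠ 0, u*Hⱼu = 0 ∀j } = min_t λ_max(J + Σ tⱼHⱼ). -/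
open Matrix

/-- The largest eigenvalue of a Hermitian matrix, as the supremum of the Rayleigh
quotient over the unit sphere. -/
noncomputable def lambdaMax {n : ℕ} (H : Matrix (Fin n) (Fin n) ℂ) : ℝ :=
  sSup {r : ℝ | ∃ x : Fin n → ℂ, evNorm x = 1 ∧ r = (star x ⬝ᵥ H.mulVec x).re}

set_option maxHeartbeats 1000000

section Aux

variable {n : ℕ} {A : Matrix (Fin n) (Fin n) ℂ}

lemma evNorm_nonneg (v : Fin n → ℂ) : 0 ≤ evNorm v := norm_nonneg _

lemma rayleigh_expand (hA : A.IsHermitian) (x : EuclideanSpace ℂ (Fin n)) :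
    (star (⇑x) ⬝ᵥ A *ᵥ ⇑x).re
      = ∑ i, hA.eigenvalues i * ‖hA.eigenvectorBasis.repr x i‖ ^ 2 := by
  set B := hA.eigenvectorBasis with hB
  have hT : ∀ y : EuclideanSpace ℂ (Fin n),
      Matrix.toEuclideanLin A y = (WithLp.equiv 2 (Fin n → ℂ)).symm (A *ᵥ ⇑y) :=
    fun y => by rw [Matrix.toEuclideanLin_apply]; rfl
  have hinner : (inner ℂ x (Matrix.toEuclideanLin A x) : ℂ) = star (⇑x) ⬝ᵥ A *ᵥ ⇑x := by
    rw [hT]; exact dotProduct_comm _ _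
  have hTB : ∀ i, Matrix.toEuclideanLin A (B i) = hA.eigenvalues i • B i := fun i => by
    rw [hT]; exact congrArg (WithLp.equiv 2 (Fin n → ℂ)).symm (hA.mulVec_eigenvectorBasis i)
  have hTx : Matrix.toEuclideanLin A x = ∑ i, (B.repr x i * (hA.eigenvalues i : ℂ)) • B i := by
    conv_lhs => rw [show x = ∑ i, B.repr x i • B i from (B.sum_repr x).symm]
    rw [map_sum (Matrix.toEuclideanLin A)]
    refine Finset.sum_congr rfl fun i _ => ?_
    rw [LinearMap.map_smul, hTB i, RCLike.real_smul_eq_coe_smul (K := ℂ), smul_smul]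
    rfl
  have key : (inner ℂ x (Matrix.toEuclideanLin A x) : ℂ)
      = ∑ i, (hA.eigenvalues i : ℂ) * ((starRingEnd ℂ) (B.repr x i) * B.repr x i) := by
    rw [hTx, inner_sum]
    refine Finset.sum_congr rfl fun i _ => ?_
    rw [inner_smul_right, show (inner ℂ x (B i) : ℂ) = (starRingEnd ℂ) (B.repr x i) by
      rw [B.repr_apply_apply, inner_conj_symm]]
    ring
  rw [← hinner, key, Complex.re_sum]
  refine Finset.sum_congr rfl fun i _ => ?_
  rw [RCLike.conj_mul]
  simp [Complex.mul_re]
  left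
  rw [← Complex.ofReal_pow]
  exact Complex.ofReal_re _

lemma parseval (B : OrthonormalBasis (Fin n) ℂ (EuclideanSpace ℂ (Fin n)))
    (x : EuclideanSpace ℂ (Fin n)) : ∑ i, ‖B.repr x i‖ ^ 2 = ‖x‖ ^ 2 := by
  rw [← B.repr.norm_map x, EuclideanSpace.norm_eq, Real.sq_sqrt (by positivity)]

lemma herm_real (hA : A.IsHermitian) (x : Fin n → ℂ) :
    star x ⬝ᵥ A *ᵥ x = ((star x ⬝ᵥ A *ᵥ x).re : ℂ) := by
  set y : EuclideanSpace ℂ (Fin n) := (WithLp.equiv 2 (Fin n → ℂ)).symm x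
  have hy : (inner ℂ y (Matrix.toEuclideanLin A y) : ℂ) = star x ⬝ᵥ A *ᵥ x := by
    rw [Matrix.toEuclideanLin_apply]; exact dotProduct_comm _ _
  have hsym := (Matrix.isHermitian_iff_isSymmetric.1 hA)
  have : (starRingEnd ℂ) (star x ⬝ᵥ A *ᵥ x) = star x ⬝ᵥ A *ᵥ x := by
    rw [← hy, inner_conj_symm]
    exact hsym y y
  exact (Complex.conj_eq_iff_re.mp this).symm

lemma cs_dot (a b : Fin n → ℂ) : ‖star a ⬝ᵥ b‖ ≤ evNorm a * evNorm b := by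
  have := norm_inner_le_norm (𝕜 := ℂ) ((WithLp.equiv 2 (Fin n → ℂ)).symm a)
    ((WithLp.equiv 2 (Fin n → ℂ)).symm b)
  have h : inner ℂ ((WithLp.equiv 2 (Fin n → ℂ)).symm a) ((WithLp.equiv 2 (Fin n → ℂ)).symm b)
      = star a ⬝ᵥ b := dotProduct_comm _ _
  rw [h] at this
  exact this

lemma op_bound (E : Matrix (Fin n) (Fin n) ℂ) :
    ∃ N : ℝ, 0 ≤ N ∧ ∀ x : Fin n → ℂ, evNorm (E *ᵥ x) ≤ N * evNorm x := by
  set L := LinearMap.toContinuousLinearMap (Matrix.toEuclideanLin E)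
  refine ⟨‖L‖, norm_nonneg _, fun x => ?_⟩
  have h := L.le_opNorm ((WithLp.equiv 2 (Fin n → ℂ)).symm x)
  have h2 : L ((WithLp.equiv 2 (Fin n → ℂ)).symm x)
      = (WithLp.equiv 2 (Fin n → ℂ)).symm (E *ᵥ x) := by
    rw [show ⇑L = ⇑(Matrix.toEuclideanLin E) from LinearMap.coe_toContinuousLinearMap' _,
      Matrix.toEuclideanLin_apply]; rfl
  rw [h2] at h
  exact h

lemma evNorm_smul (c : ℂ) (x : Fin n → ℂ) : evNorm (c • x) = ‖c‖ * evNorm x := by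
  unfold evNorm
  rw [show (WithLp.equiv 2 (Fin n → ℂ)).symm (c • x) = c • (WithLp.equiv 2 (Fin n → ℂ)).symm x
    from rfl, norm_smul]

lemma dot_self_re (x : Fin n → ℂ) : (star x ⬝ᵥ x).re = evNorm x ^ 2 := by
  have : (inner ℂ ((WithLp.equiv 2 (Fin n → ℂ)).symm x) ((WithLp.equiv 2 (Fin n → ℂ)).symm x) : ℂ)
      = star x ⬝ᵥ x := dotProduct_comm _ _
  rw [← this]
  exact inner_self_eq_norm_sq (𝕜 := ℂ) _

lemma lambdaMax_spec (hn : n ≠ 0) (hA : A.IsHermitian) :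
    (∃ i₀, hA.eigenvalues i₀ = lambdaMax A ∧ ∀ i, hA.eigenvalues i ≤ lambdaMax A) ∧
    (∀ x : Fin n → ℂ, (star x ⬝ᵥ A *ᵥ x).re ≤ lambdaMax A * evNorm x ^ 2) := by
  haveI : Nonempty (Fin n) := ⟨⟨0, Nat.pos_of_ne_zero hn⟩⟩
  set B := hA.eigenvectorBasis
  obtain ⟨i₀, -, hmax⟩ := Finset.exists_max_image Finset.univ hA.eigenvalues
    ⟨Classical.arbitrary _, Finset.mem_univ _⟩
  set μ := hA.eigenvalues i₀ with hμ
  set S := {r : ℝ | ∃ x : Fin n → ℂ, evNorm x = 1 ∧ r = (star x ⬝ᵥ A.mulVec x).re} with hS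
  have hub : ∀ r ∈ S, r ≤ μ := by
    rintro r ⟨x, hx1, rfl⟩
    set y : EuclideanSpace ℂ (Fin n) := (WithLp.equiv 2 (Fin n → ℂ)).symm x with hy
    have hxy : ⇑y = x := rfl
    have hny : ‖y‖ = 1 := hx1
    calc (star x ⬝ᵥ A *ᵥ x).re = ∑ i, hA.eigenvalues i * ‖B.repr y i‖ ^ 2 := by
          rw [← hxy]; exact rayleigh_expand hA y
      _ ≤ ∑ i, μ * ‖B.repr y i‖ ^ 2 := by
          refine Finset.sum_le_sum fun i _ => ?_
          exact mul_le_mul_of_nonneg_right (hmax i (Finset.mem_univ i)) (by positivity)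
      _ = μ * ‖y‖ ^ 2 := by rw [← Finset.mul_sum, parseval]
      _ = μ := by rw [hny]; ring
  have hmem : μ ∈ S := by
    refine ⟨⇑(B i₀), ?_, ?_⟩
    · show ‖((WithLp.equiv 2 (Fin n → ℂ)).symm ⇑(B i₀))‖ = 1
      exact B.orthonormal.1 i₀
    · rw [rayleigh_expand hA (B i₀),
        Finset.sum_eq_single i₀
          (fun i _ hi => by simp [B, OrthonormalBasis.repr_self, EuclideanSpace.single_apply, hi])
          (fun h => absurd (Finset.mem_univ i₀) h)]
      simp [B, OrthonormalBasis.repr_self, EuclideanSpace.single_apply, hμ]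
  have hsup : lambdaMax A = μ :=
    le_antisymm (csSup_le ⟨μ, hmem⟩ hub) (le_csSup ⟨μ, hub⟩ hmem)
  refine ⟨⟨i₀, hsup.symm, fun i => hsup ▸ hmax i (Finset.mem_univ i)⟩, fun x => ?_⟩
  set y : EuclideanSpace ℂ (Fin n) := (WithLp.equiv 2 (Fin n → ℂ)).symm x with hy
  have hxy : ⇑y = x := rfl
  calc (star x ⬝ᵥ A *ᵥ x).re = ∑ i, hA.eigenvalues i * ‖B.repr y i‖ ^ 2 := by
        rw [← hxy]; exact rayleigh_expand hA y
    _ ≤ ∑ i, μ * ‖B.repr y i‖ ^ 2 := Finset.sum_le_sum fun i _ =>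
        mul_le_mul_of_nonneg_right (hmax i (Finset.mem_univ i)) (by positivity)
    _ = μ * ‖y‖ ^ 2 := by rw [← Finset.mul_sum, parseval]
    _ = lambdaMax A * evNorm x ^ 2 := by rw [hsup]; rfl

lemma dot_sum {ι : Type*} (s : Finset ι) (v : Fin n → ℂ) (f : ι → Fin n → ℂ) :
    v ⬝ᵥ (∑ k ∈ s, f k) = ∑ k ∈ s, v ⬝ᵥ f k := by
  simp only [dotProduct, Finset.sum_apply, Finset.mul_sum]
  rw [Finset.sum_comm]

lemma sum_mulVec' {ι : Type*} (s : Finset ι) (M : ι → Matrix (Fin n) (Fin n) ℂ)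
    (v : Fin n → ℂ) : (∑ k ∈ s, M k) *ᵥ v = ∑ k ∈ s, M k *ᵥ v := by
  funext i
  simp only [Matrix.mulVec, dotProduct, Finset.sum_apply, Finset.sum_mul,
    Matrix.sum_apply]
  rw [Finset.sum_comm]


lemma pert (hM : A.IsHermitian) {E : Matrix (Fin n) (Fin n) ℂ} (hE : E.IsHermitian)
    (i₀ : Fin n) (hl : hM.eigenvalues i₀ = lambdaMax A)
    (δ : ℝ) (hδ : 0 < δ) (hgap : ∀ i, i ≠ i₀ → hM.eigenvalues i ≤ lambdaMax A - δ) :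
    ∃ K s₀ : ℝ, 0 ≤ K ∧ 0 < s₀ ∧ ∀ s : ℝ, |s| ≤ s₀ →
      lambdaMax (A + (s : ℂ) • E) ≤ lambdaMax A
        + s * (star ⇑(hM.eigenvectorBasis i₀) ⬝ᵥ E *ᵥ ⇑(hM.eigenvectorBasis i₀)).re
        + K * s ^ 2 := by
  obtain ⟨N, hN0, hNb⟩ := op_bound E
  set lam := lambdaMax A with hlam
  set B := hM.eigenvectorBasis with hB
  set u : Fin n → ℂ := ⇑(B i₀) with hu
  set c : ℝ := (star u ⬝ᵥ E *ᵥ u).re with hc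
  have hu1 : evNorm u = 1 := B.orthonormal.1 i₀
  refine ⟨2 * N ^ 2 / δ, δ / (2 * (|c| + 1)), by positivity, by positivity, fun s hs => ?_⟩
  set K := 2 * N ^ 2 / δ with hK
  have hKδ : K * δ = 2 * N ^ 2 := by rw [hK, div_mul_cancel₀ _ hδ.ne']
  have hsc : |s| * |c| ≤ δ / 2 := by
    have h1 : |s| * |c| ≤ (δ / (2 * (|c| + 1))) * |c| :=
      mul_le_mul_of_nonneg_right hs (abs_nonneg c)
    have h2 : (δ / (2 * (|c| + 1))) * |c| ≤ δ / 2 := by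
      rw [div_mul_eq_mul_div, div_le_div_iff₀ (by positivity) (by norm_num)]
      nlinarith [abs_nonneg c, hδ.le]
    linarith
  -- bound every element of the Rayleigh set
  apply csSup_le
  · exact ⟨(star u ⬝ᵥ (A + (s:ℂ) • E) *ᵥ u).re, u, hu1, rfl⟩
  rintro ρ ⟨x, hx1, rfl⟩
  set y : EuclideanSpace ℂ (Fin n) := (WithLp.equiv 2 (Fin n → ℂ)).symm x with hy
  have hxy : ⇑y = x := rfl
  have hny : ‖y‖ = 1 := hx1
  set cc : Fin n → ℂ := fun i => B.repr y i with hcc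
  set a : ℂ := cc i₀ with ha
  set w' : EuclideanSpace ℂ (Fin n) := y - a • (B i₀) with hw'
  set m : ℝ := ‖w'‖ with hm
  have hm0 : 0 ≤ m := norm_nonneg _
  set a2 : ℝ := ‖a‖ ^ 2 with ha2
  have hreprw : ∀ i, B.repr w' i = if i = i₀ then 0 else cc i := by
    intro i
    rw [hw', map_sub, LinearIsometryEquiv.map_smul, B.repr_self]
    by_cases h : i = i₀
    · subst h
      simp [PiLp.sub_apply, PiLp.smul_apply, EuclideanSpace.single_apply, ha, hcc]
    · simp [PiLp.sub_apply, PiLp.smul_apply, EuclideanSpace.single_apply, h, hcc]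
  have hsplit : ∀ i ∈ Finset.univ.erase i₀, ‖B.repr w' i‖ ^ 2 = ‖cc i‖ ^ 2 := by
    intro i hi
    rw [hreprw i, if_neg (Finset.mem_erase.mp hi).1]
  have hm2 : m ^ 2 = ∑ i ∈ Finset.univ.erase i₀, ‖cc i‖ ^ 2 := by
    calc m ^ 2 = ∑ i, ‖B.repr w' i‖ ^ 2 := (parseval B w').symm
      _ = ‖B.repr w' i₀‖ ^ 2 + ∑ i ∈ Finset.univ.erase i₀, ‖B.repr w' i‖ ^ 2 :=
          (Finset.add_sum_erase _ _ (Finset.mem_univ i₀)).symm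
      _ = ∑ i ∈ Finset.univ.erase i₀, ‖cc i‖ ^ 2 := by
          rw [hreprw i₀, if_pos rfl, Finset.sum_congr rfl hsplit]; simp
  have hpars : a2 + m ^ 2 = 1 := by
    have h := parseval B y
    rw [← Finset.add_sum_erase _ (fun i => ‖B.repr y i‖ ^ 2) (Finset.mem_univ i₀), hny,
      one_pow] at h
    rw [ha2, hm2]
    exact h
  have ha2m : 0 ≤ a2 := by positivity
  have haa : ‖a‖ ≤ 1 := by
    have : (‖a‖) ^ 2 ≤ 1 := by
      rw [show (‖a‖) ^ 2 = a2 from rfl]; nlinarith [sq_nonneg m]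
    nlinarith [norm_nonneg a]
  -- A-part bound
  have hApart : (star x ⬝ᵥ A *ᵥ x).re ≤ lam * a2 + (lam - δ) * m ^ 2 := by
    rw [← hxy, rayleigh_expand hM y,
      ← Finset.add_sum_erase _ (fun i => hM.eigenvalues i * ‖B.repr y i‖ ^ 2) (Finset.mem_univ i₀)]
    have h1 : hM.eigenvalues i₀ * ‖B.repr y i₀‖ ^ 2 = lam * a2 := by rw [hl]
    have h2 : ∑ i ∈ Finset.univ.erase i₀, hM.eigenvalues i * ‖B.repr y i‖ ^ 2
        ≤ (lam - δ) * m ^ 2 := by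
      rw [hm2, Finset.mul_sum]
      refine Finset.sum_le_sum fun i hi => ?_
      exact mul_le_mul_of_nonneg_right (hgap i (Finset.mem_erase.mp hi).1) (by positivity)
    linarith [h2, le_of_eq h1]
  -- E-part
  set w : Fin n → ℂ := ⇑w' with hwdef
  have hmw : evNorm w = m := rfl
  have hxdecomp : x = a • u + w := by
    funext i
    have : w i = x i - (a • u) i := rfl
    simp [this]
  have hEsplit : star x ⬝ᵥ E *ᵥ x
      = star (a • u) ⬝ᵥ E *ᵥ (a • u) + (star w ⬝ᵥ E *ᵥ x + star (a • u) ⬝ᵥ E *ᵥ w) := by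
    rw [hxdecomp]
    simp only [star_add, Matrix.mulVec_add, add_dotProduct, dotProduct_add]
    ring
  have hcore : star (a • u) ⬝ᵥ E *ᵥ (a • u) = ((a2 * c : ℝ) : ℂ) := by
    rw [Matrix.mulVec_smul, star_smul, smul_dotProduct, dotProduct_smul]
    rw [herm_real hE u, ← hc]
    have : (starRingEnd ℂ) a * a = ((a2 : ℝ) : ℂ) := by
      rw [RCLike.conj_mul, ha2]; norm_cast
    rw [smul_eq_mul, smul_eq_mul, ← mul_assoc]
    rw [show star a = (starRingEnd ℂ) a from rfl, this]
    norm_cast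
  have hR : ‖star w ⬝ᵥ E *ᵥ x + star (a • u) ⬝ᵥ E *ᵥ w‖ ≤ 2 * N * m := by
    have h1 : ‖star w ⬝ᵥ E *ᵥ x‖ ≤ m * (N * 1) := by
      calc ‖star w ⬝ᵥ E *ᵥ x‖ ≤ evNorm w * evNorm (E *ᵥ x) := cs_dot _ _
        _ ≤ m * (N * 1) := by
            rw [hmw]
            refine mul_le_mul_of_nonneg_left ?_ hm0
            calc evNorm (E *ᵥ x) ≤ N * evNorm x := hNb x
              _ = N * 1 := by rw [hx1]
    have h2 : ‖star (a • u) ⬝ᵥ E *ᵥ w‖ ≤ 1 * (N * m) := by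
      calc ‖star (a • u) ⬝ᵥ E *ᵥ w‖ ≤ evNorm (a • u) * evNorm (E *ᵥ w) :=
            cs_dot _ _
        _ ≤ 1 * (N * m) := by
            apply mul_le_mul
            · rw [evNorm_smul, hu1, mul_one]; exact haa
            · rw [← hmw]; exact hNb w
            · exact evNorm_nonneg _
            · norm_num
    calc ‖star w ⬝ᵥ E *ᵥ x + star (a • u) ⬝ᵥ E *ᵥ w‖
        ≤ ‖star w ⬝ᵥ E *ᵥ x‖ + ‖star (a • u) ⬝ᵥ E *ᵥ w‖ :=
          norm_add_le _ _
      _ ≤ m * (N * 1) + 1 * (N * m) := add_le_add h1 h2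
      _ = 2 * N * m := by ring
  have hEpart : |(star x ⬝ᵥ E *ᵥ x).re - a2 * c| ≤ 2 * N * m := by
    rw [hEsplit, hcore]
    have : (((a2 * c : ℝ) : ℂ) + (star w ⬝ᵥ E *ᵥ x + star (a • u) ⬝ᵥ E *ᵥ w)).re - a2 * c
        = (star w ⬝ᵥ E *ᵥ x + star (a • u) ⬝ᵥ E *ᵥ w).re := by
      simp
    rw [this]
    exact (Complex.abs_re_le_norm _).trans hR
  -- combine
  have hval : (star x ⬝ᵥ (A + (s:ℂ) • E) *ᵥ x).re
      = (star x ⬝ᵥ A *ᵥ x).re + s * (star x ⬝ᵥ E *ᵥ x).re := by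
    rw [Matrix.add_mulVec, dotProduct_add, Matrix.smul_mulVec, dotProduct_smul]
    simp [Complex.add_re, Complex.smul_re]
  rw [hval]
  set T2 : ℝ := (star x ⬝ᵥ E *ᵥ x).re with hT2
  have hsT2 : s * T2 ≤ s * (a2 * c) + |s| * (2 * N * m) := by
    have h1 : s * T2 - s * (a2 * c) = s * (T2 - a2 * c) := by ring
    have h2 : s * (T2 - a2 * c) ≤ |s * (T2 - a2 * c)| := le_abs_self _
    rw [abs_mul] at h2
    have h3 : |s| * |T2 - a2 * c| ≤ |s| * (2 * N * m) :=
      mul_le_mul_of_nonneg_left hEpart (abs_nonneg s)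
    linarith
  have hfinal : lam * a2 + (lam - δ) * m ^ 2 + (s * (a2 * c) + |s| * (2 * N * m))
      ≤ lam + s * c + K * s ^ 2 := by
    have hscm : -(s * c) * m ^ 2 ≤ (δ / 2) * m ^ 2 := by
      apply mul_le_mul_of_nonneg_right _ (sq_nonneg m)
      calc -(s * c) ≤ |s * c| := neg_le_abs _
        _ = |s| * |c| := abs_mul _ _
        _ ≤ δ / 2 := hsc
    have hsq : 0 ≤ (δ * m - 2 * N * |s|) ^ 2 := sq_nonneg _
    have hs2 : |s| ^ 2 = s ^ 2 := sq_abs s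
    have h1 : δ * (δ * m ^ 2 - 4 * N * |s| * m + 2 * K * s ^ 2) = (δ * m - 2 * N * |s|) ^ 2 := by
      linear_combination (2 * s ^ 2) * hKδ + (-4 * N ^ 2) * hs2
    have hX : 0 ≤ δ * m ^ 2 - 4 * N * |s| * m + 2 * K * s ^ 2 := by
      have h2 : δ * 0 ≤ δ * (δ * m ^ 2 - 4 * N * |s| * m + 2 * K * s ^ 2) := by
        rw [mul_zero, h1]; exact hsq
      exact le_of_mul_le_mul_left h2 hδ
    have ha2eq : a2 = 1 - m ^ 2 := by linarith
    have key1 : s * (a2 * c) = s * c - s * c * m ^ 2 := by rw [ha2eq]; ring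
    have key2 : lam * a2 = lam - lam * m ^ 2 := by rw [ha2eq]; ring
    have hscm' : -(s * c * m ^ 2) ≤ δ / 2 * m ^ 2 := by
      have : -(s * c) * m ^ 2 = -(s * c * m ^ 2) := by ring
      linarith [hscm]
    linarith [hscm', hX, key1, key2]
  calc (star x ⬝ᵥ A *ᵥ x).re + s * T2
      ≤ lam * a2 + (lam - δ) * m ^ 2 + (s * (a2 * c) + |s| * (2 * N * m)) := by linarith
    _ ≤ lam + s * c + K * s ^ 2 := hfinal

end Aux

/-- Part (ii) of Theorem 2.6: if `L(t) = λ_max (J + ∑ tⱼHⱼ)` attains its minimum at `t̂`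
and `λ_max (Ĥ)` is a simple eigenvalue of `Ĥ := J + ∑ t̂ⱼHⱼ`, then every eigenvector `u`
of `Ĥ` for `λ_max (Ĥ)` satisfies `u*Hⱼu = 0` for all `j`, and the constrained supremum
of `u*Ju/u*u` equals `min_t λ_max (J + ∑ tⱼHⱼ) = λ_max (Ĥ)`. -/
theorem constrained_rayleigh_sup_eq_min_lambdaMax {n r : ℕ}
    (J : Matrix (Fin n) (Fin n) ℂ) (H : Fin (r + 1) → Matrix (Fin n) (Fin n) ℂ)
    (hJ : J.IsHermitian) (hH : ∀ j, (H j).IsHermitian)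
    (that : Fin (r + 1) → ℝ)
    (hmin : ∀ t : Fin (r + 1) → ℝ,
      lambdaMax (J + ∑ j, (that j : ℂ) • H j) ≤ lambdaMax (J + ∑ j, (t j : ℂ) • H j))
    (hsimple : Module.finrank ℂ
      (Module.End.eigenspace (J + ∑ j, (that j : ℂ) • H j).mulVecLin
        ((lambdaMax (J + ∑ j, (that j : ℂ) • H j) : ℂ))) = 1) :
    (∀ u : Fin n → ℂ, u ≠ 0 →
        (J + ∑ j, (that j : ℂ) • H j).mulVec u =
          (lambdaMax (J + ∑ j, (that j : ℂ) • H j) : ℂ) • u →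
        ∀ j, star u ⬝ᵥ (H j).mulVec u = 0) ∧
    sSup {ρ : ℝ | ∃ u : Fin n → ℂ, u ≠ 0 ∧ (∀ j, star u ⬝ᵥ (H j).mulVec u = 0) ∧
        ρ = (star u ⬝ᵥ J.mulVec u).re / (star u ⬝ᵥ u).re} =
      lambdaMax (J + ∑ j, (that j : ℂ) • H j) := by
  classical
  -- n ≠ 0
  rcases Nat.eq_zero_or_pos n with hn0 | hnpos
  · exfalso
    subst hn0
    haveI : Subsingleton (Fin 0 → ℂ) := ⟨fun a b => funext fun i => i.elim0⟩
    rw [Module.finrank_zero_of_subsingleton] at hsimple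
    exact absurd hsimple (by norm_num)
  have hn : n ≠ 0 := Nat.pos_iff_ne_zero.mp hnpos
  -- the matrix M and its hermitianity
  set M : Matrix (Fin n) (Fin n) ℂ := J + ∑ j, (that j : ℂ) • H j with hMdef
  have hM : M.IsHermitian := by
    refine hJ.add ?_
    show (∑ j, (that j : ℂ) • H j).IsHermitian
    unfold Matrix.IsHermitian
    rw [Matrix.conjTranspose_sum]
    refine Finset.sum_congr rfl fun j _ => ?_
    rw [Matrix.conjTranspose_smul, hH j, Complex.star_def, Complex.conj_ofReal]
  set lam : ℝ := lambdaMax M with hlamdef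
  obtain ⟨⟨i₀, hi₀, hall⟩, hray⟩ := lambdaMax_spec hn hM
  set B := hM.eigenvectorBasis with hBdef
  set u₀ : Fin n → ℂ := ⇑(B i₀) with hu₀def
  have hu₀1 : evNorm u₀ = 1 := B.orthonormal.1 i₀
  have hu₀ne : u₀ ≠ 0 := by
    intro h
    have : evNorm u₀ = 0 := by rw [h]; simp [evNorm]
    rw [hu₀1] at this; norm_num at this
  have hu₀eig : M *ᵥ u₀ = (lam : ℂ) • u₀ := by
    have h := hM.mulVec_eigenvectorBasis i₀
    rw [hi₀] at h
    rw [h]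
    funext i
    simp only [Pi.smul_apply, Complex.real_smul, smul_eq_mul]
    rfl
  -- the eigenspace is spanned by u₀
  set Esp := Module.End.eigenspace M.mulVecLin ((lam : ℂ)) with hEspdef
  have hmemEsp : ∀ v : Fin n → ℂ, M *ᵥ v = (lam : ℂ) • v → v ∈ Esp := fun v hv =>
    Module.End.mem_eigenspace_iff.mpr (by rwa [Matrix.mulVecLin_apply])
  have hu₀mem : u₀ ∈ Esp := hmemEsp u₀ hu₀eig
  have hspan : Submodule.span ℂ {u₀} = Esp := by
    refine Submodule.eq_of_le_of_finrank_le (Submodule.span_le.mpr (by simpa using hu₀mem)) ?_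
    rw [hsimple, finrank_span_singleton hu₀ne]
  have hEsp_mem : ∀ v ∈ Esp, ∃ z : ℂ, z • u₀ = v := by
    intro v hv
    rw [← hspan] at hv
    exact Submodule.mem_span_singleton.mp hv
  -- strict gap from simplicity
  have hstrict : ∀ i, i ≠ i₀ → hM.eigenvalues i < lam := by
    intro i hi
    rcases lt_or_eq_of_le (hall i) with h | h
    · exact h
    exfalso
    have heig : M *ᵥ ⇑(B i) = (lam : ℂ) • ⇑(B i) := by
      have hh := hM.mulVec_eigenvectorBasis i
      rw [h] at hh
      rw [hh]
      funext k
      simp only [Pi.smul_apply, Complex.real_smul, smul_eq_mul]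
      rfl
    obtain ⟨z, hz⟩ := hEsp_mem _ (hmemEsp _ heig)
    have hBz : B i = z • B i₀ := by
      apply (WithLp.equiv 2 (Fin n → ℂ)).injective
      exact hz.symm
    have horth : (inner ℂ (B i₀) (B i) : ℂ) = 0 := B.orthonormal.2 (Ne.symm hi)
    rw [hBz, inner_smul_right, inner_self_eq_norm_sq_to_K, B.orthonormal.1 i₀] at horth
    simp at horth
    rw [horth] at hBz
    simp at hBz
    have := B.orthonormal.1 i
    rw [hBz] at this
    simp at this
  obtain ⟨δ, hδpos, hgap⟩ : ∃ δ : ℝ, 0 < δ ∧ ∀ i, i ≠ i₀ → hM.eigenvalues i ≤ lam - δ := by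
    by_cases h : (Finset.univ.erase i₀).Nonempty
    · refine ⟨lam - (Finset.univ.erase i₀).sup' h hM.eigenvalues, ?_, ?_⟩
      · have : (Finset.univ.erase i₀).sup' h hM.eigenvalues < lam :=
          (Finset.sup'_lt_iff h).mpr fun i hi => hstrict i (Finset.mem_erase.mp hi).1
        linarith
      · intro i hi
        have : hM.eigenvalues i ≤ (Finset.univ.erase i₀).sup' h hM.eigenvalues :=
          Finset.le_sup' _ (Finset.mem_erase.mpr ⟨hi, Finset.mem_univ i⟩)
        linarith
    · exact ⟨1, one_pos, fun i hi =>
        absurd ⟨i, Finset.mem_erase.mpr ⟨hi, Finset.mem_univ i⟩⟩ h⟩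
  -- lower bound from minimality, in each coordinate direction
  have hlow : ∀ (j : Fin (r + 1)) (s : ℝ), lam ≤ lambdaMax (M + (s : ℂ) • H j) := by
    intro j s
    have hmineq := hmin (fun k => that k + s * (if k = j then 1 else 0))
    have hMeq : (J + ∑ k, (((that k + s * (if k = j then 1 else 0) : ℝ)) : ℂ) • H k)
        = M + (s : ℂ) • H j := by
      have hsum : (∑ k, (((that k + s * (if k = j then 1 else 0) : ℝ)) : ℂ) • H k)
          = (∑ k, ((that k : ℝ) : ℂ) • H k) + (s : ℂ) • H j := by
        have : ∀ k, (((that k + s * (if k = j then 1 else 0) : ℝ)) : ℂ) • H k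
            = ((that k : ℝ) : ℂ) • H k + (((s * (if k = j then 1 else 0) : ℝ)) : ℂ) • H k := by
          intro k
          rw [Complex.ofReal_add, add_smul]
        rw [Finset.sum_congr rfl fun k _ => this k, Finset.sum_add_distrib]
        congr 1
        rw [Finset.sum_eq_single j (fun k _ hk => by simp [hk]) (fun h => absurd (Finset.mem_univ j) h)]
        simp
      rw [hsum, hMdef, add_assoc]
    rw [hMeq] at hmineq
    exact hmineq
  -- core: the Rayleigh quotient of each H j at u₀ vanishes
  have hcore : ∀ j, star u₀ ⬝ᵥ (H j) *ᵥ u₀ = 0 := by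
    intro j
    set c : ℝ := (star u₀ ⬝ᵥ (H j) *ᵥ u₀).re with hcdef
    have hc0 : c = 0 := by
      obtain ⟨K, s₀, hK0, hs₀pos, hb⟩ := pert hM (hH j) i₀ hi₀ δ hδpos hgap
      have hineq : ∀ s : ℝ, |s| ≤ s₀ → 0 ≤ s * c + K * s ^ 2 := by
        intro s hs
        have h1 := hlow j s
        have h2 := hb s hs
        rw [← hu₀def] at h2
        linarith
      by_contra hc0
      have hcpos : 0 < |c| := abs_pos.mpr hc0
      set ε := min (s₀ / |c|) (1 / (2 * (K + 1))) with hεdef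
      have hεpos : 0 < ε := lt_min (by positivity) (by positivity)
      have habs : |(-c * ε)| ≤ s₀ := by
        rw [abs_mul, abs_neg, abs_of_pos hεpos]
        calc |c| * ε ≤ |c| * (s₀ / |c|) :=
              mul_le_mul_of_nonneg_left (min_le_left _ _) hcpos.le
          _ = s₀ := by field_simp
      have h2 := hineq (-c * ε) habs
      have hKε : K * ε ≤ 1 / 2 := by
        calc K * ε ≤ K * (1 / (2 * (K + 1))) :=
              mul_le_mul_of_nonneg_left (min_le_right _ _) hK0
          _ ≤ 1 / 2 := by
              rw [mul_one_div, div_le_div_iff₀ (by positivity) (by norm_num)]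
              nlinarith
      have hc2 : 0 < c ^ 2 * ε := by positivity
      have h3 : K * ε * (c ^ 2 * ε) ≤ (1 / 2) * (c ^ 2 * ε) :=
        mul_le_mul_of_nonneg_right hKε (le_of_lt hc2)
      nlinarith [h2, h3, hc2]
    rw [herm_real (hH j) u₀, ← hcdef, hc0]
    norm_num
  -- part (i)
  have part1 : ∀ u : Fin n → ℂ, u ≠ 0 →
      M.mulVec u = (lam : ℂ) • u → ∀ j, star u ⬝ᵥ (H j).mulVec u = 0 := by
    intro u hu hueig j
    obtain ⟨z, hz⟩ := hEsp_mem u (hmemEsp u hueig)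
    rw [← hz, Matrix.mulVec_smul, star_smul, smul_dotProduct, dotProduct_smul,
      hcore j]
    simp
  refine ⟨part1, ?_⟩
  -- part (ii)
  set T := {ρ : ℝ | ∃ u : Fin n → ℂ, u ≠ 0 ∧ (∀ j, star u ⬝ᵥ (H j).mulVec u = 0) ∧
      ρ = (star u ⬝ᵥ J.mulVec u).re / (star u ⬝ᵥ u).re} with hTdef
  have hJM : ∀ v : Fin n → ℂ, (∀ j, star v ⬝ᵥ (H j).mulVec v = 0) →
      star v ⬝ᵥ M *ᵥ v = star v ⬝ᵥ J *ᵥ v := by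
    intro v hv
    rw [hMdef, Matrix.add_mulVec, dotProduct_add, sum_mulVec', dot_sum]
    have : ∀ k, star v ⬝ᵥ (((that k : ℝ) : ℂ) • H k) *ᵥ v = 0 := by
      intro k
      rw [Matrix.smul_mulVec, dotProduct_smul, hv k]
      simp
    rw [Finset.sum_congr rfl fun k _ => this k]
    simp
  have hub : ∀ ρ ∈ T, ρ ≤ lam := by
    rintro ρ ⟨v, hv0, hvc, rfl⟩
    have hden : (star v ⬝ᵥ v).re = evNorm v ^ 2 := dot_self_re v
    have hvne : (WithLp.equiv 2 (Fin n → ℂ)).symm v ≠ 0 := by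
      intro h
      apply hv0
      have := congrArg (WithLp.equiv 2 (Fin n → ℂ)) h
      simpa using this
    have hdpos : 0 < evNorm v ^ 2 := by
      have : 0 < evNorm v := norm_pos_iff.mpr hvne
      positivity
    rw [hden, div_le_iff₀ (by linarith)]
    have h1 : (star v ⬝ᵥ J *ᵥ v).re = (star v ⬝ᵥ M *ᵥ v).re := by rw [hJM v hvc]
    rw [h1]
    exact hray v
  have hmemT : lam ∈ T := by
    refine ⟨u₀, hu₀ne, hcore, ?_⟩
    have hden : (star u₀ ⬝ᵥ u₀).re = 1 := by
      rw [dot_self_re, hu₀1]; norm_num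
    have hnum : (star u₀ ⬝ᵥ J *ᵥ u₀).re = lam := by
      have h1 : star u₀ ⬝ᵥ M *ᵥ u₀ = star u₀ ⬝ᵥ J *ᵥ u₀ := hJM u₀ hcore
      rw [← h1, hu₀eig, dotProduct_smul]
      have : (star u₀ ⬝ᵥ u₀).re = 1 := hden
      rw [smul_eq_mul]
      simp only [Complex.mul_re, Complex.ofReal_re, Complex.ofReal_im]
      rw [this]
      ring
    rw [hnum, hden]
    norm_num
  exact le_antisymm (csSup_le ⟨lam, hmemT⟩ hub) (le_csSup ⟨lam, hub⟩ hmemT)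
end
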